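/- Suppose the follow-the-leader (FTL) algorithm is run on the losses ℓ_1, …, ℓ_T: x_1 ∈ X is arbitrary and for each 1 ≤ t ≤ T, x_{t+1} ∈ X minimizes ∑_{τ=1}^{t} ℓ_τ(x) over x ∈ X. Then the regret satisfies ∑_{t=1}^{T} ℓ_t(x_t) − inf_{x ∈ X} ∑_{t=1}^{T} ℓ_t(x) ≤ (L²/α)·(3 + log T), where log denotes the natural logarithm. -/

import Mathlib

open Filter Topology


lemma sc_sum {d : ℕ} {X : Set (EuclideanSpace ℝ (Fin d))} (hX : Convex ℝ X) (m : ℝ)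
    (s : Finset ℕ) (f : ℕ → EuclideanSpace ℝ (Fin d) → ℝ)
    (h : ∀ i ∈ s, StrongConvexOn X m (f i)) :
    StrongConvexOn X ((s.card : ℝ) * m) (fun z => ∑ i ∈ s, f i z) := by
  constructor
  · exact hX
  · intro u hu v hv a b ha hb hab
    simp only [smul_eq_mul]
    calc ∑ i ∈ s, f i (a • u + b • v)
        ≤ ∑ i ∈ s, (a * f i u + b * f i v - a * b * (m / 2 * ‖u - v‖ ^ 2)) :=
          Finset.sum_le_sum fun i hi => by
            have := (h i hi).2 hu hv ha hb hab
            simpa [smul_eq_mul] using this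
      _ = a * ∑ i ∈ s, f i u + b * ∑ i ∈ s, f i v
            - a * b * ((s.card : ℝ) * m / 2 * ‖u - v‖ ^ 2) := by
          rw [Finset.sum_sub_distrib, Finset.sum_add_distrib, ← Finset.mul_sum, ← Finset.mul_sum,
            Finset.sum_const, nsmul_eq_mul]
          ring

lemma sc_min {d : ℕ} {X : Set (EuclideanSpace ℝ (Fin d))} {m : ℝ}
    {f : EuclideanSpace ℝ (Fin d) → ℝ}
    (hf : StrongConvexOn X m f) {z y : EuclideanSpace ℝ (Fin d)} (hz : z ∈ X) (hy : y ∈ X)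
    (hmin : ∀ w ∈ X, f z ≤ f w) : m / 2 * ‖y - z‖ ^ 2 ≤ f y - f z := by
  set c : ℝ := ‖y - z‖ ^ 2 with hc
  have key : ∀ t : ℝ, 0 < t → t ≤ 1 → (1 - t) * (m / 2) * c ≤ f y - f z := by
    intro t ht0 ht1
    have ha : (0:ℝ) ≤ 1 - t := by linarith
    have hab : (1 - t) + t = 1 := by ring
    have h2 := hf.2 hz hy ha ht0.le hab
    have hmem : (1 - t) • z + t • y ∈ X := hf.1 hz hy ha ht0.le hab
    have h3 := hmin _ hmem
    have hnc : ‖z - y‖ ^ 2 = c := by rw [hc, norm_sub_rev]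
    have h2' : f ((1 - t) • z + t • y) ≤ (1 - t) * f z + t * f y - (1 - t) * t * (m / 2 * c) := by
      simpa [hnc] using h2
    have h4 : t * ((1 - t) * (m / 2) * c) ≤ t * (f y - f z) := by nlinarith
    exact le_of_mul_le_mul_left h4 ht0
  have hlim : Tendsto (fun t : ℝ => (1 - t) * (m / 2) * c) (𝓝[>] (0:ℝ))
      (𝓝 ((1 - 0) * (m / 2) * c)) := by
    apply Tendsto.mono_left _ nhdsWithin_le_nhds
    exact (Continuous.tendsto (by continuity) 0)
  have hev : ∀ᶠ t in 𝓝[>] (0:ℝ), (1 - t) * (m / 2) * c ≤ f y - f z := by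
    filter_upwards [self_mem_nhdsWithin,
      mem_nhdsWithin_of_mem_nhds (Iio_mem_nhds (by norm_num : (0:ℝ) < 1))] with t ht1 ht2
    exact key t ht1 (le_of_lt ht2)
  have := le_of_tendsto hlim hev
  linarith [this]

lemma harm_bound (n : ℕ) :
    ∑ t ∈ Finset.Icc 1 (n + 1), 2 / (2 * (t : ℝ) - 1) ≤ 2 + (harmonic n : ℝ) := by
  induction n with
  | zero => simp [Finset.Icc_self]; norm_num
  | succ n ih =>
    rw [Finset.sum_Icc_succ_top (by omega : 1 ≤ n + 1 + 1), harmonic_succ]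
    have h1 : 2 / (2 * ((n : ℝ) + 1 + 1) - 1) ≤ ((n : ℝ) + 1)⁻¹ := by
      rw [div_le_iff₀ (by push_cast; linarith [Nat.cast_nonneg (α := ℝ) n]),
        inv_mul_eq_div, le_div_iff₀ (by positivity)]
      push_cast; linarith [Nat.cast_nonneg (α := ℝ) n]
    push_cast
    push_cast at ih h1
    linarith




/-- **FTL regret bound for strongly convex, Lipschitz losses.**
If the follow-the-leader algorithm is run on losses `ℓ 1, …, ℓ T`, each
`α`-strongly convex and `L`-Lipschitz on a nonempty convex set `X ⊆ ℝ^d`, with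
`x (t+1)` minimizing the cumulative loss `∑_{τ=1}^t ℓ τ` over `X`, then the
regret is at most `(L² / α) * (3 + log T)`. -/
theorem ftl_regret_strongly_convex
    {d : ℕ} (X : Set (EuclideanSpace ℝ (Fin d)))
    (hXne : X.Nonempty) (hXconv : Convex ℝ X)
    (α L : ℝ) (hα : 0 < α) (hL : 0 ≤ L)
    (T : ℕ) (hT : 1 ≤ T)
    (ℓ : ℕ → EuclideanSpace ℝ (Fin d) → ℝ)
    (hsc : ∀ t ∈ Finset.Icc 1 T, StrongConvexOn X α (ℓ t))
    (hlip : ∀ t ∈ Finset.Icc 1 T, ∀ x ∈ X, ∀ y ∈ X, |ℓ t x - ℓ t y| ≤ L * ‖x - y‖)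
    (x : ℕ → EuclideanSpace ℝ (Fin d)) (hx1 : x 1 ∈ X)
    (hmin : ∀ t ∈ Finset.Icc 1 T, x (t + 1) ∈ X ∧
      ∀ y ∈ X, ∑ τ ∈ Finset.Icc 1 t, ℓ τ (x (t + 1)) ≤ ∑ τ ∈ Finset.Icc 1 t, ℓ τ y) :
    ∀ y ∈ X,
      ∑ t ∈ Finset.Icc 1 T, ℓ t (x t) - ∑ t ∈ Finset.Icc 1 T, ℓ t y ≤
        L ^ 2 / α * (3 + Real.log T) := by
  intro y hy
  -- membership of iterates
  have xmem : ∀ t, 1 ≤ t → t ≤ T + 1 → x t ∈ X := by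
    intro t h1 h2
    match t, h1 with
    | 1, _ => exact hx1
    | (s + 2), _ =>
      exact (hmin (s + 1) (Finset.mem_Icc.mpr ⟨by omega, by omega⟩)).1
  -- strong convexity of partial sums
  have hF : ∀ t, t ≤ T → StrongConvexOn X ((t : ℝ) * α)
      (fun z => ∑ τ ∈ Finset.Icc 1 t, ℓ τ z) := by
    intro t ht
    have h := sc_sum hXconv α (Finset.Icc 1 t) ℓ (fun i hi => by
      rw [Finset.mem_Icc] at hi
      exact hsc i (Finset.mem_Icc.mpr ⟨hi.1, le_trans hi.2 ht⟩))
    have hcard : ((Finset.Icc 1 t).card : ℝ) = (t : ℝ) := by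
      rw [Nat.card_Icc]; push_cast [Nat.add_sub_cancel]; ring
    rwa [hcard] at h
  -- per-step regret bound
  have key : ∀ t ∈ Finset.Icc 1 T,
      ℓ t (x t) - ℓ t (x (t + 1)) ≤ L ^ 2 / α * (2 / (2 * (t : ℝ) - 1)) := by
    intro t ht
    rw [Finset.mem_Icc] at ht
    obtain ⟨s, rfl⟩ : ∃ s, t = s + 1 := ⟨t - 1, by omega⟩
    have hxt : x (s + 1) ∈ X := xmem _ (by omega) (by omega)
    have hxt1 : x (s + 2) ∈ X := xmem _ (by omega) (by omega)
    set D : ℝ := ‖x (s + 1) - x (s + 2)‖ with hDdef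
    have hD0 : 0 ≤ D := norm_nonneg _
    have hup : ℓ (s + 1) (x (s + 1)) - ℓ (s + 1) (x (s + 2)) ≤ L * D :=
      le_trans (le_abs_self _)
        (hlip (s + 1) (Finset.mem_Icc.mpr ⟨by omega, by omega⟩) _ hxt _ hxt1)
    have hmin1 := hmin (s + 1) (Finset.mem_Icc.mpr ⟨by omega, by omega⟩)
    have hlow1 : ((s : ℝ) + 1) * α / 2 * D ^ 2 ≤
        (∑ τ ∈ Finset.Icc 1 (s + 1), ℓ τ (x (s + 1)))
          - ∑ τ ∈ Finset.Icc 1 (s + 1), ℓ τ (x (s + 2)) := by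
      have h := sc_min (hF (s + 1) (by omega)) hmin1.1 hxt (fun w hw => hmin1.2 w hw)
      push_cast at h
      linarith
    have hlow2 : (s : ℝ) * α / 2 * D ^ 2 ≤
        (∑ τ ∈ Finset.Icc 1 s, ℓ τ (x (s + 2)))
          - ∑ τ ∈ Finset.Icc 1 s, ℓ τ (x (s + 1)) := by
      rcases Nat.eq_zero_or_pos s with h0 | hpos
      · subst h0; simp
      · have hmin0 := hmin s (Finset.mem_Icc.mpr ⟨hpos, by omega⟩)
        have h := sc_min (hF s (by omega)) hmin0.1 hxt1 (fun w hw => hmin0.2 w hw)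
        rw [norm_sub_rev] at h
        linarith
    have hsum : ∀ u, ∑ τ ∈ Finset.Icc 1 (s + 1), ℓ τ u
        = (∑ τ ∈ Finset.Icc 1 s, ℓ τ u) + ℓ (s + 1) u :=
      fun u => Finset.sum_Icc_succ_top (by omega) _
    have hglow : (2 * ((s : ℝ) + 1) - 1) * α / 2 * D ^ 2
        ≤ ℓ (s + 1) (x (s + 1)) - ℓ (s + 1) (x (s + 2)) := by
      rw [hsum, hsum] at hlow1
      linarith
    set c : ℝ := (2 * ((s : ℝ) + 1) - 1) * α / 2 with hcdef
    have hc : 0 < c := by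
      have hs := Nat.cast_nonneg (α := ℝ) s
      rw [hcdef]; nlinarith
    have m1 : c * (ℓ (s + 1) (x (s + 1)) - ℓ (s + 1) (x (s + 2)))
        ≤ c * (L * D) := mul_le_mul_of_nonneg_left hup hc.le
    have m2 : c * (c * D ^ 2)
        ≤ c * (ℓ (s + 1) (x (s + 1)) - ℓ (s + 1) (x (s + 2))) := by
      have := mul_le_mul_of_nonneg_left hglow hc.le
      linarith
    have htarget : c * (ℓ (s + 1) (x (s + 1)) - ℓ (s + 1) (x (s + 2))) ≤ L ^ 2 := by
      nlinarith [sq_nonneg (c * D - L)]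
    have hle : ℓ (s + 1) (x (s + 1)) - ℓ (s + 1) (x (s + 2)) ≤ L ^ 2 / c :=
      (le_div_iff₀ hc).mpr (by linarith [htarget])
    have heq : L ^ 2 / α * (2 / (2 * (((s : ℕ) + 1 : ℕ) : ℝ) - 1)) = L ^ 2 / c := by
      rw [hcdef]
      have hs := Nat.cast_nonneg (α := ℝ) s
      have h2s : (0:ℝ) < 2 * ((s : ℝ) + 1) - 1 := by linarith
      push_cast
      field_simp
    rw [heq]
    exact hle
  -- be-the-leader
  have btl : ∀ t, 1 ≤ t → t ≤ T →
      ∑ τ ∈ Finset.Icc 1 t, ℓ τ (x (τ + 1)) ≤ ∑ τ ∈ Finset.Icc 1 t, ℓ τ (x (t + 1)) := by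
    intro t ht1
    induction t, ht1 using Nat.le_induction with
    | base => intro _; simp
    | succ n hn ih =>
      intro hnT
      have hy2 : x (n + 2) ∈ X := xmem _ (by omega) (by omega)
      rw [Finset.sum_Icc_succ_top (by omega : 1 ≤ n + 1),
        Finset.sum_Icc_succ_top (by omega : 1 ≤ n + 1)]
      have h1 := ih (by omega)
      have h2 := (hmin n (Finset.mem_Icc.mpr ⟨hn, by omega⟩)).2 _ hy2
      linarith
  have hbtl := btl T hT le_rfl
  have hminT := (hmin T (Finset.mem_Icc.mpr ⟨hT, le_rfl⟩)).2 y hy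
  -- harmonic bound
  obtain ⟨n, rfl⟩ : ∃ n, T = n + 1 := ⟨T - 1, by omega⟩
  have hhar : ∑ t ∈ Finset.Icc 1 (n + 1), 2 / (2 * (t : ℝ) - 1)
      ≤ 3 + Real.log ((n : ℝ) + 1) := by
    have h1 := harm_bound n
    have h2 := harmonic_le_one_add_log n
    have h3 : Real.log (n : ℝ) ≤ Real.log ((n : ℝ) + 1) := by
      rcases Nat.eq_zero_or_pos n with h0 | hpos
      · subst h0; simp
      · exact Real.log_le_log (by positivity) (by linarith)
    linarith
  have hnonneg : 0 ≤ L ^ 2 / α := by positivity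
  calc ∑ t ∈ Finset.Icc 1 (n + 1), ℓ t (x t) - ∑ t ∈ Finset.Icc 1 (n + 1), ℓ t y
      ≤ ∑ t ∈ Finset.Icc 1 (n + 1), ℓ t (x t)
        - ∑ t ∈ Finset.Icc 1 (n + 1), ℓ t (x (t + 1)) := by linarith
    _ = ∑ t ∈ Finset.Icc 1 (n + 1), (ℓ t (x t) - ℓ t (x (t + 1))) :=
        (Finset.sum_sub_distrib _ _).symm
    _ ≤ ∑ t ∈ Finset.Icc 1 (n + 1), L ^ 2 / α * (2 / (2 * (t : ℝ) - 1)) :=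
        Finset.sum_le_sum key
    _ = L ^ 2 / α * ∑ t ∈ Finset.Icc 1 (n + 1), 2 / (2 * (t : ℝ) - 1) :=
        (Finset.mul_sum _ _ _).symm
    _ ≤ L ^ 2 / α * (3 + Real.log ((n : ℝ) + 1)) :=
        mul_le_mul_of_nonneg_left hhar hnonneg
    _ = L ^ 2 / α * (3 + Real.log ((n + 1 : ℕ) : ℝ)) := by push_cast; ring
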